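/- For the Business Dinner Problem with t = 2 tables, s = 4 suppliers, σ = 2, and ⌈c/γ⌉ = 2 customer groups, no feasible schedule with 2 dinners exists, and an optimal schedule uses exactly 3 dinners. -/

import Mathlib

/-- A schedule of `d` dinners for the Business Dinner Problem with `t` tables,
`s` suppliers, `c` customers, at most `σ` suppliers and at most `γ` customers
per table. `supSeat e i = some tb` means supplier `i` sits at table `tb` at
dinner `e` (and `none` means the supplier skips the dinner); similarly for
customers. -/
structure BDSchedule (t s c σ γ d : ℕ) where
  supSeat : Fin d → Fin s → Option (Fin t)
  cusSeat : Fin d → Fin c → Option (Fin t)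
  /-- at most `σ` suppliers at each table at each dinner -/
  supCap : ∀ (e : Fin d) (tb : Fin t),
    (Finset.univ.filter fun i : Fin s => supSeat e i = some tb).card ≤ σ
  /-- at most `γ` customers at each table at each dinner -/
  cusCap : ∀ (e : Fin d) (tb : Fin t),
    (Finset.univ.filter fun k : Fin c => cusSeat e k = some tb).card ≤ γ
  /-- every supplier and customer share a table at exactly one dinner -/
  meetOnce : ∀ (i : Fin s) (k : Fin c), ∃! e : Fin d,
    ∃ tb : Fin t, supSeat e i = some tb ∧ cusSeat e k = some tb
  /-- two distinct suppliers share a table at no more than one dinner -/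
  supPairOnce : ∀ i j : Fin s, i ≠ j →
    (Finset.univ.filter fun e : Fin d =>
      ∃ tb : Fin t, supSeat e i = some tb ∧ supSeat e j = some tb).card ≤ 1

/-- The exceptional case `(m, 2n) = (2, 4)`: with `t = 2` tables, `s = 4`
suppliers, `σ = 2` and `⌈c/γ⌉ = 2`, there is no feasible schedule in `2`
dinners and the optimal schedule uses exactly `3` dinners. -/
def sched3 (c γ : ℕ) (hc2 : c ≤ 2*γ) : BDSchedule 2 4 c 2 γ 3 where
  supSeat := ![![some 0, some 0, some 1, some 1], ![some 1, none, some 0, none],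
    ![none, some 1, none, some 0]]
  cusSeat := fun _ k => if k.val < γ then some 0 else some 1
  supCap := by decide
  cusCap := by
    intro e tb
    fin_cases tb
    · refine le_trans (Finset.card_le_card_of_injOn (fun k => k.val) ?_ ?_)
        (le_of_eq (Finset.card_range γ))
      · intro k hk
        simp only [Finset.mem_filter, Finset.mem_univ, true_and] at hk
        by_cases h : k.val < γ
        · exact Finset.mem_range.mpr h
        · simp [h] at hk
      · intro a _ b _ h; exact Fin.ext h
    · refine le_trans (Finset.card_le_card_of_injOn (fun k => k.val - γ) ?_ ?_)
        (le_of_eq (Finset.card_range γ))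
      · intro k hk
        simp only [Finset.mem_filter, Finset.mem_univ, true_and] at hk
        by_cases h : k.val < γ
        · simp [h] at hk; omega
        · have := k.isLt
          refine Finset.mem_range.mpr ?_
          show k.val - γ < γ
          omega
      · intro a ha b hb h
        simp only [Finset.mem_coe, Finset.mem_filter, Finset.mem_univ, true_and] at ha hb
        by_cases h1 : a.val < γ
        · simp [h1] at ha
        · by_cases h2 : b.val < γ
          · simp [h2] at hb
          · have h' : a.val - γ = b.val - γ := h
            exact Fin.ext (by omega)
  meetOnce := by
    intro i k
    by_cases hk : k.val < γ
    · simp only [if_pos hk, ExistsUnique]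
      fin_cases i <;> decide
    · simp only [if_neg hk, ExistsUnique]
      fin_cases i <;> decide
  supPairOnce := by
    intro i j
    revert j
    fin_cases i <;> (intro j; fin_cases j <;> (intro h; revert h; decide))

lemma no_two_dinners (c γ : ℕ) (hγc : γ < c) : ¬ Nonempty (BDSchedule 2 4 c 2 γ 2) := by
  rintro ⟨S⟩
  have hc0 : 0 < c := lt_of_le_of_lt (Nat.zero_le γ) hγc
  set k0 : Fin c := ⟨0, hc0⟩ with hk0
  -- every supplier is seated at every dinner
  have attend : ∀ (i : Fin 4) (e : Fin 2), ∃ tb, S.supSeat e i = some tb := by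
    intro i e
    by_contra hno
    push_neg at hno
    have hdichot : ∀ a b : Fin 2, a ≠ b → a = (if b = 0 then 1 else 0) := by decide
    set e' : Fin 2 := if e = 0 then 1 else 0 with he'
    have hall : ∀ k : Fin c, ∃ tb, S.supSeat e' i = some tb ∧ S.cusSeat e' k = some tb := by
      intro k
      obtain ⟨f, ⟨tb, hs, hck⟩, _⟩ := S.meetOnce i k
      have hfe : f ≠ e := by rintro rfl; exact hno tb hs
      have := hdichot f e hfe
      rw [this] at hs hck
      exact ⟨tb, hs, hck⟩
    obtain ⟨tb0, hstb0, _⟩ := hall k0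
    have hallc : ∀ k : Fin c, S.cusSeat e' k = some tb0 := by
      intro k
      obtain ⟨tb, hs, hck⟩ := hall k
      rw [hstb0] at hs
      injection hs with h
      rw [h]; exact hck
    have hcle : c ≤ γ := by
      have heq : (Finset.univ.filter fun k : Fin c => S.cusSeat e' k = some tb0)
          = Finset.univ := Finset.filter_true_of_mem (fun k _ => hallc k)
      have := S.cusCap e' tb0
      rw [heq] at this
      simpa using this
    omega
  -- the dinner at which supplier i meets customer k0
  have hG : ∀ i : Fin 4, ∃ e : Fin 2,
      ∃ tb, S.supSeat e i = some tb ∧ S.cusSeat e k0 = some tb :=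
    fun i => (S.meetOnce i k0).exists
  choose g hg using hG
  -- each fiber of g has at most 2 elements
  have hfib : ∀ e : Fin 2, (Finset.univ.filter fun i : Fin 4 => g i = e).card ≤ 2 := by
    intro e
    cases hck : S.cusSeat e k0 with
    | none =>
      have hemp : (Finset.univ.filter fun i : Fin 4 => g i = e) = ∅ := by
        refine Finset.eq_empty_of_forall_notMem fun i hi => ?_
        simp only [Finset.mem_filter, Finset.mem_univ, true_and] at hi
        obtain ⟨tb, _, hcc⟩ := hg i
        rw [hi, hck] at hcc
        simp at hcc
      simp [hemp]
    | some tb =>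
      refine le_trans (Finset.card_le_card ?_) (S.supCap e tb)
      intro i hi
      simp only [Finset.mem_filter, Finset.mem_univ, true_and] at hi ⊢
      obtain ⟨tb', hs, hcc⟩ := hg i
      rw [hi, hck] at hcc
      injection hcc with h
      rw [h, ← hi]; exact hs
  have hsum : (Finset.univ.filter fun i : Fin 4 => g i = 0).card
      + (Finset.univ.filter fun i : Fin 4 => g i = 1).card = 4 := by
    have h4 : (Finset.univ : Finset (Fin 4)).card = 4 := by simp
    have hfw := Finset.card_eq_sum_card_fiberwise
      (f := g) (s := (Finset.univ : Finset (Fin 4))) (t := (Finset.univ : Finset (Fin 2)))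
      (fun x _ => Finset.mem_univ _)
    rw [Fin.sum_univ_two] at hfw
    omega
  have hf0 : (Finset.univ.filter fun i : Fin 4 => g i = 0).card = 2 := by
    have := hfib 0; have := hfib 1; omega
  have hf1 : (Finset.univ.filter fun i : Fin 4 => g i = 1).card = 2 := by
    have := hfib 0; have := hfib 1; omega
  -- two distinct suppliers in each fiber
  obtain ⟨i, hi, j, hj, hijne⟩ := Finset.one_lt_card.mp (by omega : 1 <
    (Finset.univ.filter fun i : Fin 4 => g i = 0).card)
  obtain ⟨i', hi', j', hj', hij'ne⟩ := Finset.one_lt_card.mp (by omega : 1 <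
    (Finset.univ.filter fun i : Fin 4 => g i = 1).card)
  simp only [Finset.mem_filter, Finset.mem_univ, true_and] at hi hj hi' hj'
  -- tables at dinner 0 for i, j (same table T0 := k0's table at dinner 0)
  obtain ⟨T0i, hsi, hci⟩ := hg i
  obtain ⟨T0j, hsj, hcj⟩ := hg j
  rw [hi] at hsi hci
  rw [hj] at hsj hcj
  have hT0 : T0j = T0i := by rw [hci] at hcj; exact (Option.some_inj.mp hcj).symm
  rw [hT0] at hsj
  -- i', j' share a table at dinner 1
  obtain ⟨T1i, hsi', hci'⟩ := hg i'
  obtain ⟨T1j, hsj', hcj'⟩ := hg j'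
  rw [hi'] at hsi' hci'
  rw [hj'] at hsj' hcj'
  have hT1 : T1j = T1i := by rw [hci'] at hcj'; exact (Option.some_inj.mp hcj').symm
  rw [hT1] at hsj'
  -- i', j' are seated at dinner 0, not at table T0i
  have hnotT0 : ∀ a : Fin 4, g a = 1 → ∀ u, S.supSeat 0 a = some u → u ≠ T0i := by
    intro a ha u hu heq
    rw [heq] at hu
    have hsub : ({i, j, a} : Finset (Fin 4)) ⊆
        Finset.univ.filter fun x : Fin 4 => S.supSeat 0 x = some T0i := by
      intro x hx
      simp only [Finset.mem_insert, Finset.mem_singleton] at hx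
      simp only [Finset.mem_filter, Finset.mem_univ, true_and]
      rcases hx with rfl | rfl | rfl
      · exact hsi
      · exact hsj
      · exact hu
    have hai : a ≠ i := fun h => by rw [h, hi] at ha; exact absurd ha (by decide)
    have haj : a ≠ j := fun h => by rw [h, hj] at ha; exact absurd ha (by decide)
    have hcard : ({i, j, a} : Finset (Fin 4)).card = 3 := by
      rw [Finset.card_insert_of_notMem (by simp [hijne, hai.symm]),
        Finset.card_insert_of_notMem (by simp [haj.symm]), Finset.card_singleton]
    have := Finset.card_le_card hsub
    have := S.supCap 0 T0i
    omega
  obtain ⟨u, hu⟩ := attend i' 0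
  obtain ⟨v, hv⟩ := attend j' 0
  have huv : u = v := by
    have h1 := hnotT0 i' hi' u hu
    have h2 := hnotT0 j' hj' v hv
    have hdic : ∀ u v w : Fin 2, u ≠ w → v ≠ w → u = v := by decide
    exact hdic u v T0i h1 h2
  rw [huv] at hu
  -- i', j' share a table at both dinners: contradiction
  have hsub2 : ({0, 1} : Finset (Fin 2)) ⊆ Finset.univ.filter fun e : Fin 2 =>
      ∃ tb : Fin 2, S.supSeat e i' = some tb ∧ S.supSeat e j' = some tb := by
    intro x hx
    simp only [Finset.mem_insert, Finset.mem_singleton] at hx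
    simp only [Finset.mem_filter, Finset.mem_univ, true_and]
    rcases hx with rfl | rfl
    · exact ⟨v, hu, hv⟩
    · exact ⟨T1i, hsi', hsj'⟩
  have hc2 : ({0, 1} : Finset (Fin 2)).card = 2 := by decide
  have := Finset.card_le_card hsub2
  have := S.supPairOnce i' j' hij'ne
  omega

lemma no_one_dinner (c γ : ℕ) (hγc : γ < c) (d : ℕ) (hd : d ≤ 1) :
    ¬ Nonempty (BDSchedule 2 4 c 2 γ d) := by
  rintro ⟨S⟩
  have hc0 : 0 < c := lt_of_le_of_lt (Nat.zero_le γ) hγc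
  set k0 : Fin c := ⟨0, hc0⟩ with hk0
  interval_cases d
  · exact (S.meetOnce 0 k0).exists.choose.elim0
  · obtain ⟨e0, ⟨tb0, hs0, hc0'⟩, _⟩ := S.meetOnce 0 k0
    have he0 : e0 = 0 := Subsingleton.elim _ _
    rw [he0] at hs0
    have hallc : ∀ k : Fin c, S.cusSeat 0 k = some tb0 := by
      intro k
      obtain ⟨e, ⟨tb, hs, hck⟩, _⟩ := S.meetOnce 0 k
      have he : e = 0 := Subsingleton.elim _ _
      rw [he] at hs hck
      rw [hs0] at hs
      injection hs with h
      rw [h]; exact hck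
    have heq : (Finset.univ.filter fun k : Fin c => S.cusSeat 0 k = some tb0)
        = Finset.univ := Finset.filter_true_of_mem (fun k _ => hallc k)
    have := S.cusCap 0 tb0
    rw [heq] at this
    simp at this
    omega

theorem business_dinner_exceptional_case (c γ : ℕ) (hγ : 1 ≤ γ) (hc : 1 ≤ c)
    (h2 : ⌈(c : ℚ) / γ⌉ = 2) :
    ¬ Nonempty (BDSchedule 2 4 c 2 γ 2) ∧
    IsLeast {d : ℕ | Nonempty (BDSchedule 2 4 c 2 γ d)} 3 := by
  have hγQ : (0:ℚ) < γ := by exact_mod_cast hγ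
  rw [Int.ceil_eq_iff] at h2
  have hγc : γ < c := by
    have h1 : (1:ℚ) < c / γ := by push_cast at h2 ⊢; linarith [h2.1]
    exact_mod_cast (one_lt_div hγQ).mp h1
  have hc2 : c ≤ 2*γ := by
    have h1 : (c:ℚ) ≤ 2 * γ := by
      have := (div_le_iff₀ hγQ).mp h2.2
      push_cast at this ⊢; linarith
    exact_mod_cast h1
  refine ⟨no_two_dinners c γ hγc, ⟨⟨sched3 c γ hc2⟩, ?_⟩⟩
  intro d hd
  by_contra hlt
  push_neg at hlt
  interval_cases d
  · exact no_one_dinner c γ hγc 0 (by omega) hd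
  · exact no_one_dinner c γ hγc 1 (by omega) hd
  · exact no_two_dinners c γ hγc hd
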